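/- Let E be a real Hilbert space, let L₀ > 0, let F : E → ℝ be differentiable with L₀-Lipschitz gradient, let h : E → ℝ be convex, let 0 < η' ≤ 3/(2L₀), and let g, R ∈ E. Suppose R⁺ ∈ E is a minimizer over E of u ↦ ⟨g, u⟩ + h(u) + (1/(2η'))‖u − R‖², and R⁺ₑ ∈ E is a minimizer over E of u ↦ ⟨∇F(R), u⟩ + h(u) + (1/(2η'))‖u − R‖². Set 𝒢̃ = (R − R⁺)/η' and 𝒢 = (R − R⁺ₑ)/η'. Then F(R⁺) + h(R⁺) ≤ F(R) + h(R) + (η'²L₀/4 − 3η'/8)‖𝒢‖² + (7η'/4 − η'²L₀/2)‖g − ∇F(R)‖². -/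

import Mathlib

open scoped RealInnerProductSpace

section Aux

variable {E : Type*} [NormedAddCommGroup E] [InnerProductSpace ℝ E]

private lemma scal_aux (a D Q e : ℝ) (ha2 : a ≤ 3/2) (hD : 0 ≤ D) (hQ : 0 ≤ Q)
    (he : 0 ≤ e) (hle : Q ≤ D + e) :
    e*D + (a/2 - 1)*D^2 ≤ (a/4 - 3/8)*Q^2 + (7/4 - a/2)*e^2 := by
  have hA : (0:ℝ) < 5/8 - a/4 := by linarith
  have h1 : 0 ≤ (3/8 - a/4) * ((D + e - Q) * (D + e + Q)) := by
    apply mul_nonneg (by linarith)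
    apply mul_nonneg (by linarith) (by linarith)
  nlinarith [sq_nonneg ((5/8 - a/4)*D - (7/8 - a/4)*e), mul_nonneg (le_of_lt hA) h1,
    mul_nonneg (by linarith : (0:ℝ) ≤ 3/8 - a/4) (sq_nonneg e), hA, h1]

private lemma limit_aux (C D : ℝ) (hD : 0 ≤ D)
    (key : ∀ t : ℝ, 0 < t → t ≤ 1 → 0 ≤ C + t * D) : 0 ≤ C := by
  by_contra hc
  push_neg at hc
  have hden : (0:ℝ) < 2 * (D + 1) := by linarith
  have htpos : 0 < min 1 (-C / (2 * (D + 1))) :=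
    lt_min one_pos (div_pos (by linarith) hden)
  have hk := key _ htpos (min_le_left _ _)
  have htD : min 1 (-C / (2 * (D + 1))) * D ≤ (-C / (2 * (D + 1))) * D :=
    mul_le_mul_of_nonneg_right (min_le_right _ _) hD
  have hlt : (-C / (2 * (D + 1))) * D < -C := by
    rw [div_mul_eq_mul_div, div_lt_iff₀ hden]
    nlinarith
  linarith

/-- Subgradient-type optimality condition for the proximal minimizer. -/
private lemma prox_subgrad (h : E → ℝ) (hconv : ConvexOn ℝ Set.univ h)
    (η' : ℝ) (hη' : 0 < η') (g R P : E)
    (hmin : ∀ u : E, ⟪g, P⟫ + h P + 1 / (2 * η') * ‖P - R‖ ^ 2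
        ≤ ⟪g, u⟫ + h u + 1 / (2 * η') * ‖u - R‖ ^ 2) (u : E) :
    h P ≤ h u + ⟪g, u - P⟫ + (1/η') * ⟪P - R, u - P⟫ := by
  have key : ∀ t : ℝ, 0 < t → t ≤ 1 →
      0 ≤ (⟪g, u - P⟫ + h u - h P + (1/η') * ⟪P - R, u - P⟫)
        + t * (1 / (2 * η') * ‖u - P‖ ^ 2) := by
    intro t ht ht1
    have hmt : (0:ℝ) ≤ 1 - t := by linarith
    have hut : P + t • (u - P) = t • u + (1 - t) • P := by
      rw [smul_sub, sub_smul, one_smul]; abel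
    have hco := hconv.2 (Set.mem_univ u) (Set.mem_univ P) ht.le hmt (by ring)
    rw [← hut] at hco
    have hco' : h (P + t • (u - P)) ≤ t * h u + (1 - t) * h P := by
      simpa [smul_eq_mul] using hco
    have hmin' := hmin (P + t • (u - P))
    have hinner : ⟪g, P + t • (u - P)⟫ = ⟪g, P⟫ + t * ⟪g, u - P⟫ := by
      rw [inner_add_right, real_inner_smul_right]
    have hnorm : ‖P + t • (u - P) - R‖ ^ 2
        = ‖P - R‖ ^ 2 + 2 * (t * ⟪P - R, u - P⟫) + t^2 * ‖u - P‖ ^ 2 := by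
      have h0 : P + t • (u - P) - R = (P - R) + t • (u - P) := by abel
      rw [h0, norm_add_sq_real, real_inner_smul_right, norm_smul]
      simp only [Real.norm_eq_abs, mul_pow, sq_abs]
    rw [hinner, hnorm] at hmin'
    have hexp : 1 / (2 * η') * (‖P - R‖ ^ 2 + 2 * (t * ⟪P - R, u - P⟫) + t^2 * ‖u - P‖ ^ 2)
        = 1 / (2 * η') * ‖P - R‖ ^ 2 + t * ((1/η') * ⟪P - R, u - P⟫)
          + t * (t * (1 / (2 * η') * ‖u - P‖ ^ 2)) := by
      field_simp
    have h2 : 0 ≤ t * (⟪g, u - P⟫ + h u - h P + (1/η') * ⟪P - R, u - P⟫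
        + t * (1 / (2 * η') * ‖u - P‖ ^ 2)) := by
      have expand : t * (⟪g, u - P⟫ + h u - h P + (1/η') * ⟪P - R, u - P⟫
          + t * (1 / (2 * η') * ‖u - P‖ ^ 2))
          = t * ⟪g, u - P⟫ + (t * h u + (1 - t) * h P - h P)
            + (t * ((1/η') * ⟪P - R, u - P⟫) + t * (t * (1 / (2 * η') * ‖u - P‖ ^ 2))) := by
        ring
      rw [expand]
      linarith [hmin', hco', hexp]
    nlinarith [h2, ht]
  have := limit_aux _ _ (by positivity) key
  linarith

/-- Descent lemma for a function with `L₀`-Lipschitz gradient. -/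
private lemma descent_lemma [CompleteSpace E] (L₀ : ℝ) (Fn : E → ℝ)
    (hdiff : Differentiable ℝ Fn)
    (hlip : ∀ x y : E, ‖gradient Fn x - gradient Fn y‖ ≤ L₀ * ‖x - y‖) (x y : E) :
    Fn y ≤ Fn x + ⟪gradient Fn x, y - x⟫ + L₀ / 2 * ‖y - x‖ ^ 2 := by
  set d : E := y - x with hd
  set c1 : ℝ := ⟪gradient Fn x, d⟫ with hc1
  have hφ : ∀ t : ℝ, HasDerivAt (fun s : ℝ => Fn (x + s • d))
      ⟪gradient Fn (x + t • d), d⟫ t := by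
    intro t
    have hline : HasDerivAt (fun s : ℝ => x + s • d) d t := by
      simpa using ((hasDerivAt_id t).smul_const d).const_add x
    have hF : HasFDerivAt Fn (InnerProductSpace.toDual ℝ E (gradient Fn (x + t • d)))
        (x + t • d) := (hdiff (x + t • d)).hasGradientAt.hasFDerivAt
    have := hF.comp_hasDerivAt t hline
    simpa [Function.comp_def, InnerProductSpace.toDual_apply_apply] using this
  set δ : ℝ → ℝ := fun t => Fn x + t * c1 + L₀ / 2 * t ^ 2 * ‖d‖ ^ 2 - Fn (x + t • d)
    with hδ
  have hδd : ∀ t : ℝ, HasDerivAt δ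
      (c1 + L₀ * t * ‖d‖ ^ 2 - ⟪gradient Fn (x + t • d), d⟫) t := by
    intro t
    have h1 : HasDerivAt (fun s : ℝ => Fn x + s * c1 + L₀ / 2 * s ^ 2 * ‖d‖ ^ 2)
        (c1 + L₀ * t * ‖d‖ ^ 2) t := by
      have ha : HasDerivAt (fun s : ℝ => s * c1) c1 t := by
        simpa using (hasDerivAt_id t).mul_const c1
      have hb : HasDerivAt (fun s : ℝ => L₀ / 2 * s ^ 2 * ‖d‖ ^ 2)
          (L₀ / 2 * (2 * t) * ‖d‖ ^ 2) t := by
        have := (hasDerivAt_pow 2 t).const_mul (L₀ / 2)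
        simpa using (this.mul_const (‖d‖ ^ 2))
      have := (ha.const_add (Fn x)).add hb
      exact this.congr_deriv (by ring)
    exact h1.sub (hφ t)
  have hdiffδ : Differentiable ℝ δ := fun t => (hδd t).differentiableAt
  have hmono : MonotoneOn δ (Set.Icc (0:ℝ) 1) := by
    apply monotoneOn_of_deriv_nonneg (convex_Icc 0 1) hdiffδ.continuous.continuousOn
    · intro t _
      exact (hdiffδ t).differentiableWithinAt
    · intro t ht
      rw [interior_Icc] at ht
      rw [(hδd t).deriv]
      have hbound : ⟪gradient Fn (x + t • d) - gradient Fn x, d⟫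
          ≤ L₀ * t * ‖d‖ ^ 2 := by
        calc ⟪gradient Fn (x + t • d) - gradient Fn x, d⟫
            ≤ ‖gradient Fn (x + t • d) - gradient Fn x‖ * ‖d‖ :=
              real_inner_le_norm _ _
          _ ≤ (L₀ * ‖(x + t • d) - x‖) * ‖d‖ :=
              mul_le_mul_of_nonneg_right (hlip _ _) (norm_nonneg d)
          _ = L₀ * t * ‖d‖ ^ 2 := by
              rw [add_sub_cancel_left, norm_smul]
              simp [Real.norm_eq_abs, abs_of_nonneg ht.1.le]
              ring
      have hsplit : ⟪gradient Fn (x + t • d), d⟫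
          = c1 + ⟪gradient Fn (x + t • d) - gradient Fn x, d⟫ := by
        rw [hc1, ← inner_add_left]
        congr 1
        abel
      rw [hsplit]
      linarith
  have h01 := hmono (Set.left_mem_Icc.2 zero_le_one)
    (Set.right_mem_Icc.2 zero_le_one) zero_le_one
  have hy : x + d = y := by rw [hd]; abel
  have hδ0 : δ 0 = 0 := by simp [hδ]
  have hδ1 : δ 1 = Fn x + c1 + L₀ / 2 * ‖d‖ ^ 2 - Fn y := by
    simp [hδ, hy]
  rw [hδ0, hδ1] at h01
  rw [hc1, hd] at h01
  linarith

end Aux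

/-- inequality (25) in the proof of Theorem 1. Composite descent inequality
in terms of the exact gradient mapping `𝒢`: with `0 < η' ≤ 3/(2L₀)`,
`F(R⁺) + h(R⁺) ≤ F(R) + h(R) + (η'²L₀/4 − 3η'/8)‖𝒢‖² + (7η'/4 − η'²L₀/2)‖g − ∇F(R)‖²`. -/
theorem stmt13 {E : Type*} [NormedAddCommGroup E] [InnerProductSpace ℝ E] [CompleteSpace E]
    (L₀ : ℝ) (hL₀ : 0 < L₀)
    (Fn : E → ℝ) (hdiff : Differentiable ℝ Fn)
    (hlip : ∀ x y : E, ‖gradient Fn x - gradient Fn y‖ ≤ L₀ * ‖x - y‖)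
    (h : E → ℝ) (hconv : ConvexOn ℝ Set.univ h)
    (η' : ℝ) (hη' : 0 < η') (hη'le : η' ≤ 3 / (2 * L₀))
    (g R Rplus RplusE : E)
    (hmin : ∀ u : E,
      ⟪g, Rplus⟫ + h Rplus + 1 / (2 * η') * ‖Rplus - R‖ ^ 2
        ≤ ⟪g, u⟫ + h u + 1 / (2 * η') * ‖u - R‖ ^ 2)
    (hminE : ∀ u : E,
      ⟪gradient Fn R, RplusE⟫ + h RplusE + 1 / (2 * η') * ‖RplusE - R‖ ^ 2
        ≤ ⟪gradient Fn R, u⟫ + h u + 1 / (2 * η') * ‖u - R‖ ^ 2) :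
    Fn Rplus + h Rplus
      ≤ Fn R + h R + (η' ^ 2 * L₀ / 4 - 3 * η' / 8) * ‖(1 / η') • (R - RplusE)‖ ^ 2
        + (7 * η' / 4 - η' ^ 2 * L₀ / 2) * ‖g - gradient Fn R‖ ^ 2 := by
  set d : E := Rplus - R with hdd
  set e : E := g - gradient Fn R with hee
  set δ : E := RplusE - Rplus with hδδ
  -- (a) descent lemma
  have ha : Fn Rplus ≤ Fn R + ⟪gradient Fn R, d⟫ + L₀ / 2 * ‖d‖ ^ 2 :=
    descent_lemma L₀ Fn hdiff hlip R Rplus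
  -- (b) subgradient inequality at u = R for the inexact prox
  have hsg := prox_subgrad h hconv η' hη' g R Rplus hmin
  have hb : h Rplus ≤ h R - ⟪g, d⟫ - (1/η') * ‖d‖ ^ 2 := by
    have hbb := hsg R
    have h1 : ⟪g, R - Rplus⟫ = -⟪g, d⟫ := by
      rw [hdd, ← inner_neg_right]; congr 1; abel
    have h2 : ⟪Rplus - R, R - Rplus⟫ = -‖d‖ ^ 2 := by
      rw [hdd]
      have h0 : R - Rplus = -(Rplus - R) := by abel
      rw [h0, inner_neg_right, real_inner_self_eq_norm_sq]
    rw [h1, h2] at hbb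
    have : (1/η') * -‖d‖^2 = -((1/η') * ‖d‖^2) := by ring
    rw [this] at hbb
    linarith
  -- (c) the two prox points are close: ‖δ‖ ≤ η' ‖e‖
  have hc : ‖δ‖ ≤ η' * ‖e‖ := by
    have hsgE := prox_subgrad h hconv η' hη' (gradient Fn R) R RplusE hminE
    have k1 := hsg RplusE
    have k2 := hsgE Rplus
    have h4 : ⟪g, RplusE - Rplus⟫ + ⟪gradient Fn R, Rplus - RplusE⟫ = ⟪e, δ⟫ := by
      rw [hee, hδδ, inner_sub_left]
      have h0 : ⟪gradient Fn R, Rplus - RplusE⟫ = -⟪gradient Fn R, RplusE - Rplus⟫ := by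
        rw [← inner_neg_right]; congr 1; abel
      rw [h0]; ring
    have h5 : (1/η') * ⟪Rplus - R, RplusE - Rplus⟫ + (1/η') * ⟪RplusE - R, Rplus - RplusE⟫
        = -((1/η') * ‖δ‖ ^ 2) := by
      have ha1 : ⟪Rplus - R, RplusE - Rplus⟫ - ⟪RplusE - R, RplusE - Rplus⟫
          = -⟪RplusE - Rplus, RplusE - Rplus⟫ := by
        rw [← inner_sub_left]
        have h0 : Rplus - R - (RplusE - R) = -(RplusE - Rplus) := by abel
        rw [h0, inner_neg_left]
      have ha2 : ⟪RplusE - R, Rplus - RplusE⟫ = -⟪RplusE - R, RplusE - Rplus⟫ := by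
        rw [← inner_neg_right]; congr 1; abel
      have ha3 : ⟪RplusE - Rplus, RplusE - Rplus⟫ = ‖δ‖ ^ 2 := by
        rw [hδδ, real_inner_self_eq_norm_sq]
      rw [ha2]
      have hcomb : (1/η') * ⟪Rplus - R, RplusE - Rplus⟫
          + (1/η') * -⟪RplusE - R, RplusE - Rplus⟫
          = (1/η') * (⟪Rplus - R, RplusE - Rplus⟫ - ⟪RplusE - R, RplusE - Rplus⟫) := by
        ring
      rw [hcomb, ha1, ha3]
      ring
    have hsum : 0 ≤ ⟪e, δ⟫ - (1/η') * ‖δ‖ ^ 2 := by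
      linarith [k1, k2, h4, h5]
    have hCS : ⟪e, δ⟫ ≤ ‖e‖ * ‖δ‖ := real_inner_le_norm _ _
    have hδn : (1/η') * ‖δ‖ ^ 2 ≤ ‖e‖ * ‖δ‖ := by linarith
    by_cases hz : ‖δ‖ = 0
    · rw [hz]; positivity
    · have hδpos : 0 < ‖δ‖ := lt_of_le_of_ne (norm_nonneg _) (Ne.symm hz)
      have h6 : (1/η') * ‖δ‖ ≤ ‖e‖ := by
        have h7 : (1/η') * ‖δ‖ * ‖δ‖ ≤ ‖e‖ * ‖δ‖ := by nlinarith [hδn]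
        exact (mul_le_mul_iff_of_pos_right hδpos).1 h7
      calc ‖δ‖ = η' * ((1/η') * ‖δ‖) := by field_simp
        _ ≤ η' * ‖e‖ := mul_le_mul_of_nonneg_left h6 hη'.le
  -- (d) Cauchy-Schwarz for the cross term
  have hd2 : ⟪gradient Fn R - g, d⟫ ≤ ‖e‖ * ‖d‖ := by
    calc ⟪gradient Fn R - g, d⟫ ≤ ‖gradient Fn R - g‖ * ‖d‖ := real_inner_le_norm _ _
      _ = ‖e‖ * ‖d‖ := by
          congr 1
          rw [hee, ← norm_neg]; congr 1; abel
  -- norm of R - RplusE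
  have hQ : ‖R - RplusE‖ ≤ ‖d‖ + η' * ‖e‖ := by
    have h0 : R - RplusE = -(d + δ) := by rw [hdd, hδδ]; abel
    rw [h0, norm_neg]
    calc ‖d + δ‖ ≤ ‖d‖ + ‖δ‖ := norm_add_le _ _
      _ ≤ ‖d‖ + η' * ‖e‖ := by linarith
  have hsmul : ‖(1 / η') • (R - RplusE)‖ ^ 2 = (1/η')^2 * ‖R - RplusE‖ ^ 2 := by
    rw [norm_smul, Real.norm_eq_abs, abs_of_pos (by positivity : (0:ℝ) < 1/η'), mul_pow]
  -- scalar combination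
  have hLa : L₀ * η' ≤ 3/2 := by
    rw [le_div_iff₀ (by positivity : (0:ℝ) < 2 * L₀)] at hη'le
    nlinarith [hη'le]
  have hscal := scal_aux (L₀ * η') ‖d‖ ‖R - RplusE‖ (η' * ‖e‖) hLa (norm_nonneg _)
    (norm_nonneg _) (by positivity) hQ
  -- put everything together
  have key : ⟪gradient Fn R - g, d⟫ + (L₀/2 - 1/η') * ‖d‖ ^ 2
      ≤ (η' ^ 2 * L₀ / 4 - 3 * η' / 8) * ((1/η')^2 * ‖R - RplusE‖ ^ 2)
        + (7 * η' / 4 - η' ^ 2 * L₀ / 2) * ‖e‖ ^ 2 := by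
    have expand : (η' ^ 2 * L₀ / 4 - 3 * η' / 8) * ((1/η')^2 * ‖R - RplusE‖ ^ 2)
        + (7 * η' / 4 - η' ^ 2 * L₀ / 2) * ‖e‖ ^ 2
        = (1/η') * (((L₀ * η')/4 - 3/8) * ‖R - RplusE‖ ^ 2
          + (7/4 - (L₀ * η')/2) * (η' * ‖e‖)^2) := by
      field_simp
    have expand2 : ⟪gradient Fn R - g, d⟫ + (L₀/2 - 1/η') * ‖d‖ ^ 2
        ≤ (1/η') * ((η' * ‖e‖) * ‖d‖ + ((L₀ * η')/2 - 1) * ‖d‖ ^ 2) := by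
      have h0 : (1/η') * ((η' * ‖e‖) * ‖d‖ + ((L₀ * η')/2 - 1) * ‖d‖ ^ 2)
          = ‖e‖ * ‖d‖ + (L₀/2 - 1/η') * ‖d‖ ^ 2 := by
        field_simp
      rw [h0]
      linarith
    rw [expand]
    calc ⟪gradient Fn R - g, d⟫ + (L₀/2 - 1/η') * ‖d‖ ^ 2
        ≤ (1/η') * ((η' * ‖e‖) * ‖d‖ + ((L₀ * η')/2 - 1) * ‖d‖ ^ 2) := expand2
      _ ≤ (1/η') * (((L₀ * η')/4 - 3/8) * ‖R - RplusE‖ ^ 2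
          + (7/4 - (L₀ * η')/2) * (η' * ‖e‖)^2) :=
          mul_le_mul_of_nonneg_left hscal (by positivity : (0:ℝ) ≤ 1/η')
  have hgd : ⟪gradient Fn R, d⟫ - ⟪g, d⟫ = ⟪gradient Fn R - g, d⟫ := by
    rw [inner_sub_left]
  have hdist : (L₀/2 - 1/η') * ‖d‖ ^ 2 = L₀/2 * ‖d‖ ^ 2 - (1/η') * ‖d‖ ^ 2 := by ring
  rw [hsmul]
  have hnn : ‖g - gradient Fn R‖ = ‖e‖ := by rw [hee]
  rw [hnn]
  linarith [ha, hb, key, hgd, hdist]
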